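/- Fix q > 0 and for X > 4q define v(X) = ∫₀^X max{(q - d(X-d)/X)/q, 0} dd. Then v(X) = X - X²/(6q) + ((X-4q)/(6q))·√X·√(X-4q). -/

import Mathlib

/-- If `X > 4q`, the value of an area of length `X` is
`v(X) = ∫₀^X max{(q - d(X-d)/X)/q, 0} dd = X - X²/(6q) + ((X-4q)/(6q))·√X·√(X-4q)`. -/
theorem area_value_long (q X : ℝ) (hq : 0 < q) (hX : 4 * q < X) :
    (∫ d in (0:ℝ)..X, max ((q - d * (X - d) / X) / q) 0) =
      X - X ^ 2 / (6 * q) + (X - 4 * q) / (6 * q) * Real.sqrt X * Real.sqrt (X - 4 * q) := by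
  have hX0 : 0 < X := by linarith
  set s : ℝ := Real.sqrt X * Real.sqrt (X - 4 * q) with hs
  have hs0 : 0 ≤ s := mul_nonneg (Real.sqrt_nonneg _) (Real.sqrt_nonneg _)
  have hs2 : s ^ 2 = X * (X - 4 * q) := by
    rw [hs, mul_pow, Real.sq_sqrt hX0.le, Real.sq_sqrt (by linarith)]
  have hsX : s ≤ X := by nlinarith
  set d1 : ℝ := (X - s) / 2 with hd1
  set d2 : ℝ := (X + s) / 2 with hd2
  have h01 : (0:ℝ) ≤ d1 := by rw [hd1]; linarith
  have h12 : d1 ≤ d2 := by rw [hd1, hd2]; linarith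
  have h2X : d2 ≤ X := by rw [hd2]; linarith
  -- continuity of f
  have hfc : Continuous fun d : ℝ => (q - d * (X - d) / X) / q :=
    ((continuous_const.sub ((continuous_id.mul
      (continuous_const.sub continuous_id)).div_const X)).div_const q)
  have hgc : Continuous fun d : ℝ => max ((q - d * (X - d) / X) / q) 0 :=
    hfc.max continuous_const
  -- antiderivative
  have ideriv : ∀ a b : ℝ, (∫ d in a..b, (q - d * (X - d) / X) / q) =
      (b - b ^ 2 / (2 * q) + b ^ 3 / (3 * X * q)) -
      (a - a ^ 2 / (2 * q) + a ^ 3 / (3 * X * q)) := by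
    intro a b
    apply intervalIntegral.integral_eq_sub_of_hasDerivAt
    · intro t _
      have h : HasDerivAt (fun d : ℝ => d - d ^ 2 / (2 * q) + d ^ 3 / (3 * X * q))
          ((1 - (2 : ℕ) * t ^ (2 - 1) / (2 * q)) + (3 : ℕ) * t ^ (3 - 1) / (3 * X * q)) t :=
        ((hasDerivAt_id t).sub
          ((hasDerivAt_pow 2 t).div_const (2 * q))).add
          ((hasDerivAt_pow 3 t).div_const (3 * X * q))
      refine h.congr_deriv ?_
      push_cast
      field_simp
      ring
    · exact (hfc.intervalIntegrable a b)
  -- split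
  have hsplit : (∫ d in (0:ℝ)..X, max ((q - d * (X - d) / X) / q) 0) =
      (∫ d in (0:ℝ)..d1, max ((q - d * (X - d) / X) / q) 0) +
      (∫ d in d1..d2, max ((q - d * (X - d) / X) / q) 0) +
      (∫ d in d2..X, max ((q - d * (X - d) / X) / q) 0) := by
    rw [intervalIntegral.integral_add_adjacent_intervals
        (hgc.intervalIntegrable _ _) (hgc.intervalIntegrable _ _),
      intervalIntegral.integral_add_adjacent_intervals
        (hgc.intervalIntegrable _ _) (hgc.intervalIntegrable _ _)]
  -- first piece
  have hpos : ∀ t ∈ Set.uIcc (0:ℝ) d1, 0 ≤ (q - t * (X - t) / X) / q := by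
    intro t ht
    rw [Set.uIcc_of_le h01] at ht
    obtain ⟨ht0, ht1⟩ := ht
    apply div_nonneg _ hq.le
    have key : q * X - t * (X - t) = (d1 - t) * (d2 - t) := by
      rw [hd1, hd2]; linear_combination (1/4 : ℝ) * hs2
    have : 0 ≤ q * X - t * (X - t) := by
      rw [key]; exact mul_nonneg (by linarith) (by linarith)
    rw [sub_nonneg, div_le_iff₀ hX0]; linarith
  have e1 : (∫ d in (0:ℝ)..d1, max ((q - d * (X - d) / X) / q) 0) =
      ∫ d in (0:ℝ)..d1, (q - d * (X - d) / X) / q := by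
    apply intervalIntegral.integral_congr
    intro t ht
    exact max_eq_left (hpos t ht)
  -- middle piece
  have e2 : (∫ d in d1..d2, max ((q - d * (X - d) / X) / q) 0) = 0 := by
    have : (∫ d in d1..d2, max ((q - d * (X - d) / X) / q) 0) =
        ∫ d in d1..d2, (0:ℝ) := by
      apply intervalIntegral.integral_congr
      intro t ht
      rw [Set.uIcc_of_le h12] at ht
      obtain ⟨ht1, ht2⟩ := ht
      apply max_eq_right
      apply div_nonpos_of_nonpos_of_nonneg _ hq.le
      have key : t * (X - t) - q * X = (t - d1) * (d2 - t) := by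
        rw [hd1, hd2]; linear_combination (-1/4 : ℝ) * hs2
      have : 0 ≤ t * (X - t) - q * X := by
        rw [key]; exact mul_nonneg (by linarith) (by linarith)
      rw [sub_nonpos, le_div_iff₀ hX0]; linarith
    rw [this, intervalIntegral.integral_zero]
  -- last piece
  have e3 : (∫ d in d2..X, max ((q - d * (X - d) / X) / q) 0) =
      ∫ d in d2..X, (q - d * (X - d) / X) / q := by
    apply intervalIntegral.integral_congr
    intro t ht
    rw [Set.uIcc_of_le h2X] at ht
    obtain ⟨ht2, htX⟩ := ht
    apply max_eq_left
    apply div_nonneg _ hq.le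
    have key : q * X - t * (X - t) = (t - d1) * (t - d2) := by
      rw [hd1, hd2]; linear_combination (1/4 : ℝ) * hs2
    have : 0 ≤ q * X - t * (X - t) := by
      rw [key]; exact mul_nonneg (by linarith) (by linarith)
    rw [sub_nonneg, div_le_iff₀ hX0]; linarith
  have hR : X - X ^ 2 / (6 * q) + (X - 4 * q) / (6 * q) * Real.sqrt X * Real.sqrt (X - 4 * q)
      = X - X ^ 2 / (6 * q) + (X - 4 * q) / (6 * q) * s := by rw [hs]; ring
  rw [hsplit, e1, e2, e3, ideriv, ideriv, hR, hd1, hd2]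
  have hq0 : q ≠ 0 := hq.ne'
  have hX0' : X ≠ 0 := hX0.ne'
  clear_value s d1 d2
  field_simp
  linear_combination (-12 * s) * hs2
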